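/- For every δ ∈ (0, 0.05] and every c ∈ (1, 1.15], setting γ := c·√(log(1/δ)/2), it holds that (1/γ − 1/γ³) · (1/√(2π)) · exp(−γ²/2) ≥ δ. Equivalently, (√2/(c√(log(1/δ))) − 2√2/(c³ (log(1/δ))^{3/2})) · (1/√(2π)) · δ^{c²/4} ≥ δ. Consequently, if W is a standard Gaussian N(0,1) random variable, then P(W ≥ c·√(log(1/δ)/2)) ≥ δ for all δ ∈ (0, 0.05] and c ∈ (1, 1.15]. -/

import Mathlib

open ProbabilityTheory

section Aux
open MeasureTheory Filter Set

private lemma exp2_ub : Real.exp 2 < 7.3890561 := by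
  have h := Real.exp_one_lt_d9
  have h2 : Real.exp 2 = Real.exp 1 * Real.exp 1 := by
    rw [← Real.exp_add]; norm_num
  nlinarith [Real.exp_pos 1]

private lemma exp026_lb : (1.2962 : ℝ) < Real.exp 0.26 := by
  have h64 : Real.exp 0.26 = Real.exp (0.26/64) ^ (64 : ℕ) := by
    rw [← Real.exp_nat_mul]; norm_num
  have h1 : (1 + 0.26/64 : ℝ) ≤ Real.exp (0.26/64) := by
    have := Real.add_one_le_exp (0.26/64 : ℝ); linarith
  have h2 : ((1 + 0.26/64 : ℝ)) ^ (64:ℕ) ≤ Real.exp (0.26/64) ^ (64:ℕ) :=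
    pow_le_pow_left₀ (by norm_num) h1 64
  have h3 : (1.2962 : ℝ) < (1 + 0.26/64 : ℝ) ^ (64:ℕ) := by norm_num
  rw [h64]; linarith

private lemma exp174_ub : Real.exp 1.74 < 5.7006 := by
  have hm : Real.exp 1.74 * Real.exp 0.26 = Real.exp 2 := by
    rw [← Real.exp_add]; norm_num
  nlinarith [exp2_ub, exp026_lb, Real.exp_pos 1.74]

private lemma exp199_ub : Real.exp 1.99 < 7.316 := by
  have hm : Real.exp 1.99 * Real.exp 0.01 = Real.exp 2 := by
    rw [← Real.exp_add]; norm_num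
  have h1 : (1.01 : ℝ) ≤ Real.exp 0.01 := by
    have := Real.add_one_le_exp (0.01 : ℝ); linarith
  nlinarith [exp2_ub, Real.exp_pos 1.99]

private lemma exp3_ub : Real.exp 3 < 20.08553693 := by
  have h := Real.exp_one_lt_d9
  have h3 : Real.exp 3 = Real.exp 1 * Real.exp 1 * Real.exp 1 := by
    rw [← Real.exp_add, ← Real.exp_add]; norm_num
  nlinarith [Real.exp_pos 1]

private lemma exp3_lb : (20.08553691 : ℝ) < Real.exp 3 := by
  have h := Real.exp_one_gt_d9
  have h3 : Real.exp 3 = Real.exp 1 * Real.exp 1 * Real.exp 1 := by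
    rw [← Real.exp_add, ← Real.exp_add]; norm_num
  nlinarith [Real.exp_pos 1]

private lemma log20_lb : (2.9957 : ℝ) < Real.log 20 := by
  rw [Real.lt_log_iff_exp_lt (by norm_num : (0:ℝ) < 20)]
  have hm : Real.exp 2.9957 * Real.exp 0.0043 = Real.exp 3 := by
    rw [← Real.exp_add]; norm_num
  have h1 : (1.0043 : ℝ) ≤ Real.exp 0.0043 := by
    have := Real.add_one_le_exp (0.0043 : ℝ); linarith
  nlinarith [exp3_ub, Real.exp_pos 2.9957]

private lemma log20_ub : Real.log 20 < 2.9958 := by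
  rw [Real.log_lt_iff_lt_exp (by norm_num : (0:ℝ) < 20)]
  have hm : Real.exp 3 * Real.exp (-0.0042) = Real.exp 2.9958 := by
    rw [← Real.exp_add]; norm_num
  have h1 : (0.9958 : ℝ) ≤ Real.exp (-0.0042) := by
    have := Real.add_one_le_exp (-0.0042 : ℝ); linarith
  have h2 : Real.exp (-0.0042) ≤ 1 := by
    rw [Real.exp_le_one_iff]; norm_num
  nlinarith [exp3_lb, Real.exp_pos (-0.0042 : ℝ), Real.exp_pos (2.9958 : ℝ)]

private lemma base_ineq {x : ℝ} (h1 : 1.4978 ≤ x) (h2 : x ≤ 1.981) :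
    2 * Real.pi * x ^ 3 ≤ 400 * Real.exp (-x) * (x - 1) ^ 2 := by
  have hπ : Real.pi < 3.141593 := Real.pi_lt_d6
  have hπ0 : 0 < Real.pi := Real.pi_pos
  rcases le_or_gt x 1.74 with hx | hx
  · have hE : (0.17525 : ℝ) * (2.74 - x) ≤ Real.exp (-x) := by
      have hm : Real.exp (1.74 - x) * Real.exp (-1.74) = Real.exp (-x) := by
        rw [← Real.exp_add]; ring_nf
      have ha : (2.74 - x : ℝ) ≤ Real.exp (1.74 - x) := by
        have := Real.add_one_le_exp (1.74 - x : ℝ); linarith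
      have hb : (0.17525 : ℝ) ≤ Real.exp (-1.74) := by
        have hm2 : Real.exp (-1.74) * Real.exp 1.74 = 1 := by
          rw [← Real.exp_add]; norm_num
        nlinarith [exp174_ub, Real.exp_pos (1.74:ℝ), Real.exp_pos (-1.74:ℝ)]
      nlinarith [Real.exp_pos (1.74 - x)]
    nlinarith [sq_nonneg (x - 1), mul_nonneg (mul_nonneg (by linarith : (0:ℝ) ≤ x - 1.4978) (by linarith : (0:ℝ) ≤ 1.74 - x)) (by linarith : (0:ℝ) ≤ x - 1), sq_nonneg (x - 1.6)]
  · have hE : (0.1365 : ℝ) * (2.99 - x) ≤ Real.exp (-x) := by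
      have hm : Real.exp (1.99 - x) * Real.exp (-1.99) = Real.exp (-x) := by
        rw [← Real.exp_add]; ring_nf
      have ha : (2.99 - x : ℝ) ≤ Real.exp (1.99 - x) := by
        have := Real.add_one_le_exp (1.99 - x : ℝ); linarith
      have hb : (0.1365 : ℝ) ≤ Real.exp (-1.99) := by
        have hm2 : Real.exp (-1.99) * Real.exp 1.99 = 1 := by
          rw [← Real.exp_add]; norm_num
        nlinarith [exp199_ub, Real.exp_pos (1.99:ℝ), Real.exp_pos (-1.99:ℝ)]
      nlinarith [Real.exp_pos (1.99 - x)]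
    nlinarith [sq_nonneg (x - 1), mul_nonneg (mul_nonneg (by linarith : (0:ℝ) ≤ x - 1.74) (by linarith : (0:ℝ) ≤ 1.981 - x)) (by linarith : (0:ℝ) ≤ x - 1), sq_nonneg (x - 1.86)]


set_option maxHeartbeats 2000000 in
private lemma key_core (L c : ℝ) (hc1 : 1 < c) (hc : c ≤ 1.15) (hL20 : Real.log 20 ≤ L) :
    Real.exp (-L) ≤ (1 / (c * Real.sqrt (L / 2)) - 1 / (c * Real.sqrt (L / 2)) ^ 3)
      * (1 / Real.sqrt (2 * Real.pi))
      * Real.exp (-(c * Real.sqrt (L / 2)) ^ 2 / 2) := by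
  have hc0 : (0:ℝ) < c := by linarith
  obtain ⟨L₀, hL₀def⟩ : ∃ L₀ : ℝ, Real.log 20 = L₀ := ⟨_, rfl⟩
  rw [hL₀def] at hL20
  have hL0a : (2.9957:ℝ) < L₀ := hL₀def ▸ log20_lb
  have hL0b : L₀ < 2.9958 := hL₀def ▸ log20_ub
  have hL0pos : (0:ℝ) < L₀ := by linarith
  have hLpos : (0:ℝ) < L := by linarith
  obtain ⟨b, hbdef⟩ : ∃ b : ℝ, c^2/2 = b := ⟨_, rfl⟩
  have hb1 : (1/2:ℝ) < b := by rw [← hbdef]; nlinarith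
  have hb2 : b ≤ 0.661250 := by rw [← hbdef]; nlinarith
  obtain ⟨x₀, hx₀def⟩ : ∃ x₀ : ℝ, b * L₀ = x₀ := ⟨_, rfl⟩
  obtain ⟨x, hxdef⟩ : ∃ x : ℝ, b * L = x := ⟨_, rfl⟩
  have hx₀1 : (1.4978:ℝ) ≤ x₀ := by rw [← hx₀def]; nlinarith
  have hx₀2 : x₀ ≤ 1.981 := by rw [← hx₀def]; nlinarith
  have hxx₀ : x₀ ≤ x := by rw [← hx₀def, ← hxdef]; nlinarith
  have hx1 : (1:ℝ) < x := by linarith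
  have hx0 : (0:ℝ) ≤ x := by linarith
  obtain ⟨s, hsdef⟩ : ∃ s : ℝ, Real.sqrt x = s := ⟨_, rfl⟩
  have hs2 : s^2 = x := by rw [← hsdef]; exact Real.sq_sqrt hx0
  have hs1 : (1:ℝ) < s := by
    rw [← hsdef, show (1:ℝ) = Real.sqrt 1 from (Real.sqrt_one).symm]
    exact Real.sqrt_lt_sqrt (by norm_num) hx1
  have hs0 : (0:ℝ) < s := by linarith
  have hγx : c * Real.sqrt (L/2) = s := by
    rw [← hsdef, ← hxdef, ← hbdef, show c^2/2*L = c^2*(L/2) by ring,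
      Real.sqrt_mul (sq_nonneg c), Real.sqrt_sq hc0.le]
  rw [hγx]
  -- base case
  have h20 : Real.exp L₀ = 20 := by rw [← hL₀def]; exact Real.exp_log (by norm_num)
  have hπ0 : (0:ℝ) < Real.pi := Real.pi_pos
  have base : Real.sqrt (2*Real.pi) * (x₀ * Real.sqrt x₀) ≤ Real.exp (L₀ - x₀/2) * (x₀ - 1) := by
    have hA : (0:ℝ) ≤ Real.sqrt (2*Real.pi) * (x₀ * Real.sqrt x₀) := by positivity
    have hB : (0:ℝ) ≤ Real.exp (L₀ - x₀/2) * (x₀ - 1) := by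
      have := Real.exp_pos (L₀ - x₀/2); nlinarith
    have hsqA : (Real.sqrt (2*Real.pi) * (x₀ * Real.sqrt x₀))^2 = 2*Real.pi*x₀^3 := by
      rw [mul_pow, mul_pow, Real.sq_sqrt (by positivity : (0:ℝ) ≤ 2*Real.pi),
        Real.sq_sqrt (by linarith : (0:ℝ) ≤ x₀)]
      ring
    have hsqB : (Real.exp (L₀ - x₀/2) * (x₀ - 1))^2 = 400 * Real.exp (-x₀) * (x₀-1)^2 := by
      rw [mul_pow, sq (Real.exp _), ← Real.exp_add,
        show L₀ - x₀/2 + (L₀ - x₀/2) = L₀ + (L₀ + -x₀) by ring,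
        Real.exp_add, Real.exp_add, h20]
      ring
    have h := Real.sqrt_le_sqrt (show (Real.sqrt (2*Real.pi) * (x₀ * Real.sqrt x₀))^2
        ≤ (Real.exp (L₀ - x₀/2) * (x₀ - 1))^2 by
      rw [hsqA, hsqB]; exact base_ineq hx₀1 hx₀2)
    rwa [Real.sqrt_sq hA, Real.sqrt_sq hB] at h
  -- lifting
  obtain ⟨w, hwdef⟩ : ∃ w : ℝ, L / L₀ = w := ⟨_, rfl⟩
  have hw1 : (1:ℝ) ≤ w := by rw [← hwdef]; exact (one_le_div hL0pos).mpr hL20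
  have hwL : w * L₀ = L := by rw [← hwdef]; exact div_mul_cancel₀ _ (ne_of_gt hL0pos)
  obtain ⟨a, hadef⟩ : ∃ a : ℝ, 1 - b/2 = a := ⟨_, rfl⟩
  have ha : (0.669375:ℝ) ≤ a := by rw [← hadef]; linarith
  have C1 : w * Real.sqrt w ≤ Real.exp (a * (L - L₀)) := by
    have hw0 : (0:ℝ) ≤ w := by linarith
    have hwe : w ≤ Real.exp (w - 1) := by
      have := Real.add_one_le_exp (w - 1); linarith
    have hcube : w^3 ≤ Real.exp (3*(w-1)) := by
      calc w^3 ≤ Real.exp (w-1)^3 := pow_le_pow_left₀ hw0 hwe 3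
        _ = Real.exp (3*(w-1)) := by
            rw [← Real.exp_nat_mul]; norm_num
    have h32 : 3*(w-1) ≤ 2*(a*(L-L₀)) := by
      have h3 : (3:ℝ) ≤ 2*a*L₀ := by
        have hm := mul_le_mul ha hL0a.le (by norm_num : (0:ℝ) ≤ 2.9957) (by linarith : (0:ℝ) ≤ a)
        linarith
      have hw' : w*L₀ - L₀ = L - L₀ := by rw [hwL]
      nlinarith [mul_nonneg (by linarith : (0:ℝ) ≤ 2*a*L₀ - 3) (by linarith : (0:ℝ) ≤ w - 1)]
    have hA : (0:ℝ) ≤ w * Real.sqrt w := by positivity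
    have hsqA : (w * Real.sqrt w)^2 = w^3 := by
      rw [mul_pow, Real.sq_sqrt hw0]; ring
    have hsqB : Real.exp (a*(L-L₀))^2 = Real.exp (2*(a*(L-L₀))) := by
      rw [← Real.exp_nat_mul]; norm_num
    have h := Real.sqrt_le_sqrt (show (w * Real.sqrt w)^2 ≤ Real.exp (a*(L-L₀))^2 by
      rw [hsqA, hsqB]; exact hcube.trans (Real.exp_le_exp.mpr h32))
    rwa [Real.sqrt_sq hA, Real.sqrt_sq (Real.exp_pos _).le] at h
  have hxw : x = x₀ * w := by
    rw [← hx₀def, ← hxdef, ← hwL]; ring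
  have hsw : s = Real.sqrt x₀ * Real.sqrt w := by
    rw [← hsdef, hxw, Real.sqrt_mul (by linarith : (0:ℝ) ≤ x₀)]
  have hexp_split : Real.exp (L₀ - x₀/2) * Real.exp (a*(L-L₀)) = Real.exp (L - x/2) := by
    rw [← Real.exp_add]
    congr 1
    rw [← hadef, ← hx₀def, ← hxdef]; ring
  have core : Real.sqrt (2*Real.pi) * (x * s) ≤ Real.exp (L - x/2) * (x - 1) := by
    have e1 : Real.sqrt (2*Real.pi) * (x * s)
        = (Real.sqrt (2*Real.pi) * (x₀ * Real.sqrt x₀)) * (w * Real.sqrt w) := by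
      rw [hxw, hsw]; ring
    have hww : (0:ℝ) ≤ w * Real.sqrt w := by positivity
    have step1 : Real.sqrt (2*Real.pi) * (x * s)
        ≤ (Real.exp (L₀ - x₀/2) * (x₀ - 1)) * Real.exp (a*(L-L₀)) := by
      rw [e1]
      exact mul_le_mul base C1 hww (by nlinarith [Real.exp_pos (L₀ - x₀/2)])
    have step3 : Real.exp (L - x/2) * (x₀ - 1) ≤ Real.exp (L - x/2) * (x - 1) :=
      mul_le_mul_of_nonneg_left (by linarith) (Real.exp_pos _).le
    calc Real.sqrt (2*Real.pi) * (x * s)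
        ≤ (Real.exp (L₀ - x₀/2) * (x₀ - 1)) * Real.exp (a*(L-L₀)) := step1
      _ = Real.exp (L - x/2) * (x₀ - 1) := by rw [mul_right_comm, hexp_split]
      _ ≤ Real.exp (L - x/2) * (x - 1) := step3
  -- conclude
  have h1s : 1/s - 1/s^3 = (x-1)/s^3 := by
    rw [← hs2]; field_simp
  rw [h1s, hs2,
    show (x-1)/s^3 * (1 / Real.sqrt (2*Real.pi)) * Real.exp (-x/2)
      = ((x-1) * Real.exp (-x/2)) / (s^3 * Real.sqrt (2*Real.pi)) by ring,
    le_div_iff₀ (by positivity)]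
  have hmul := mul_le_mul_of_nonneg_right core (Real.exp_pos (-L)).le
  have hre : Real.exp (L - x/2) * (x-1) * Real.exp (-L) = (x-1) * Real.exp (-x/2) := by
    rw [mul_right_comm, ← Real.exp_add, show L - x/2 + -L = -x/2 by ring, mul_comm]
  have hs3 : s^3 = x * s := by rw [← hs2]; ring
  calc Real.exp (-L) * (s^3 * Real.sqrt (2*Real.pi))
      = Real.sqrt (2*Real.pi) * (x*s) * Real.exp (-L) := by rw [hs3]; ring
    _ ≤ Real.exp (L - x/2) * (x-1) * Real.exp (-L) := hmul
    _ = (x-1) * Real.exp (-x/2) := hre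

private lemma key (δ c : ℝ) (hδ0 : 0 < δ) (hδ : δ ≤ 0.05) (hc1 : 1 < c) (hc : c ≤ 1.15) :
    δ ≤ (1 / (c * Real.sqrt (Real.log (1 / δ) / 2))
        - 1 / (c * Real.sqrt (Real.log (1 / δ) / 2)) ^ 3)
      * (1 / Real.sqrt (2 * Real.pi))
      * Real.exp (-(c * Real.sqrt (Real.log (1 / δ) / 2)) ^ 2 / 2) := by
  have hL20 : Real.log 20 ≤ Real.log (1/δ) := by
    apply Real.log_le_log (by norm_num)
    rw [le_div_iff₀ hδ0]; linarith
  have hδexp : Real.exp (-Real.log (1/δ)) = δ := by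
    rw [one_div, Real.log_inv, neg_neg, Real.exp_log hδ0]
  have h := key_core (Real.log (1/δ)) c hc1 hc hL20
  rwa [hδexp] at h

private lemma exp_sq_integrable (γ : ℝ) :
    IntegrableOn (fun x : ℝ => Real.exp (-x^2/2)) (Set.Ioi γ) := by
  have h : (fun x : ℝ => Real.exp (-x^2/2)) = fun x : ℝ => Real.exp (-(1/2)*x^2) := by
    funext x; ring_nf
  rw [h]
  exact (integrable_exp_neg_mul_sq (by norm_num : (0:ℝ) < 1/2)).integrableOn

private lemma mills {γ : ℝ} (hγ : 1.21 ≤ γ) :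
    (γ⁻¹ - (γ^3)⁻¹) * Real.exp (-γ^2/2) ≤ ∫ x in Set.Ioi γ, Real.exp (-x^2/2) := by
  set F : ℝ → ℝ := fun x => -(x⁻¹ - (x^3)⁻¹) * Real.exp (-x^2/2) with hF
  set f' : ℝ → ℝ := fun x => (1 - 3*(x^4)⁻¹) * Real.exp (-x^2/2) with hf'
  have hderiv : ∀ x ∈ Set.Ici γ, HasDerivAt F (f' x) x := by
    intro x hx
    have hx0 : (0:ℝ) < x := by have := hx.out; norm_num at this ⊢; linarith
    have h1 : HasDerivAt (fun y : ℝ => y⁻¹) (-(x^2)⁻¹) x := by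
      simpa using hasDerivAt_inv hx0.ne'
    have h2 : HasDerivAt (fun y : ℝ => (y^3)⁻¹) (-(3*x^2) / (x^3)^2) x :=
      (hasDerivAt_pow 3 x).inv (pow_ne_zero 3 hx0.ne')
    have h3 : HasDerivAt (fun y : ℝ => -y^2/2) (-x) x := by
      have := ((hasDerivAt_pow 2 x).neg).div_const 2
      refine this.congr_deriv ?_
      push_cast; ring
    have h4 : HasDerivAt (fun y : ℝ => Real.exp (-y^2/2)) (-x * Real.exp (-x^2/2)) x := by
      have := h3.exp
      simpa [mul_comm] using this
    have h5 := ((h1.sub h2).neg).mul h4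
    refine h5.congr_deriv ?_
    have hx4 : x^4 ≠ 0 := pow_ne_zero 4 hx0.ne'
    rw [hf']
    simp only [Pi.neg_apply, Pi.sub_apply]
    field_simp
    ring
  have hint := exp_sq_integrable γ
  have hγ0 : (0:ℝ) < γ := by linarith
  have f'int : IntegrableOn f' (Set.Ioi γ) := by
    apply Integrable.mono' hint
    · apply ContinuousOn.aestronglyMeasurable _ measurableSet_Ioi
      apply ContinuousOn.mul
      · exact continuousOn_const.sub (continuousOn_const.mul
          (((continuous_pow 4).continuousOn).inv₀
            (fun x hx => pow_ne_zero 4 (ne_of_gt (lt_trans hγ0 hx)))))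
      · exact (Real.continuous_exp.comp (by continuity)).continuousOn
    · rw [ae_restrict_iff' measurableSet_Ioi]
      apply ae_of_all
      intro x hx
      have hxγ : γ < x := hx
      have hx1 : (1.21:ℝ) ≤ x := by linarith
      have hx4 : (1.5:ℝ) ≤ x^4 := by
        calc (1.5:ℝ) ≤ 1.21^4 := by norm_num
          _ ≤ x^4 := pow_le_pow_left₀ (by norm_num) hx1 4
      have hx4' : (0:ℝ) < x^4 := by linarith
      rw [Real.norm_eq_abs, abs_mul, abs_of_pos (Real.exp_pos _)]
      have habs : |1 - 3*(x^4)⁻¹| ≤ 1 := by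
        rw [abs_le]
        constructor
        · have : 3*(x^4)⁻¹ ≤ 2 := by
            rw [mul_inv_le_iff₀ hx4']; linarith
          linarith
        · have : (0:ℝ) ≤ 3*(x^4)⁻¹ := by positivity
          linarith
      nlinarith [Real.exp_pos (-x^2/2)]
  have htend : Tendsto F atTop (nhds 0) := by
    have h1 : Tendsto (fun x : ℝ => x⁻¹ - (x^3)⁻¹) atTop (nhds 0) := by
      have ha : Tendsto (fun x : ℝ => x⁻¹) atTop (nhds 0) := tendsto_inv_atTop_zero
      have hb : Tendsto (fun x : ℝ => (x^3)⁻¹) atTop (nhds 0) :=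
        tendsto_inv_atTop_zero.comp (tendsto_pow_atTop (by norm_num))
      simpa using ha.sub hb
    have h2 : Tendsto (fun x : ℝ => Real.exp (-x^2/2)) atTop (nhds 0) := by
      apply Real.tendsto_exp_atBot.comp
      have : Tendsto (fun x : ℝ => x^2/2) atTop atTop :=
        (tendsto_pow_atTop (by norm_num)).atTop_div_const (by norm_num)
      have := tendsto_neg_atBot_iff.mpr this
      apply this.congr
      intro x; ring
    have := (h1.neg).mul h2
    rw [neg_zero, zero_mul] at this
    exact this
  have hFTC := integral_Ioi_of_hasDerivAt_of_tendsto'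
    (f := F) (f' := f') hderiv f'int htend
  have hFγ : 0 - F γ = (γ⁻¹ - (γ^3)⁻¹) * Real.exp (-γ^2/2) := by
    rw [hF]; ring
  have hmono : ∫ x in Set.Ioi γ, f' x ≤ ∫ x in Set.Ioi γ, Real.exp (-x^2/2) := by
    apply setIntegral_mono_on f'int hint measurableSet_Ioi
    intro x hx
    have hxγ : γ < x := hx
    have hx0' : (0:ℝ) < x := lt_trans (by linarith) hxγ
    have hx4' : (0:ℝ) < x^4 := by positivity
    have : (0:ℝ) ≤ 3*(x^4)⁻¹ := by positivity
    rw [hf']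
    nlinarith [Real.exp_pos (-x^2/2)]
  calc (γ⁻¹ - (γ^3)⁻¹) * Real.exp (-γ^2/2) = 0 - F γ := hFγ.symm
    _ = ∫ x in Set.Ioi γ, f' x := hFTC.symm
    _ ≤ ∫ x in Set.Ioi γ, Real.exp (-x^2/2) := hmono

private lemma gauss_tail {γ δ : ℝ} (hγ : 1.21 ≤ γ)
    (hle : δ ≤ (1/γ - 1/γ^3) * (1 / Real.sqrt (2*Real.pi)) * Real.exp (-γ^2/2)) :
    ENNReal.ofReal δ ≤ gaussianReal 0 1 {x | γ ≤ x} := by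
  rw [gaussianReal_apply_eq_integral 0 one_ne_zero]
  apply ENNReal.ofReal_le_ofReal
  have hset : {x : ℝ | γ ≤ x} = Set.Ici γ := rfl
  rw [hset, integral_Ici_eq_integral_Ioi]
  have hpdf : ∀ x : ℝ, gaussianPDFReal 0 1 x
      = (Real.sqrt (2*Real.pi))⁻¹ * Real.exp (-x^2/2) := by
    intro x
    rw [gaussianPDFReal]
    push_cast
    norm_num
  calc δ ≤ (1/γ - 1/γ^3) * (1 / Real.sqrt (2*Real.pi)) * Real.exp (-γ^2/2) := hle
    _ = (Real.sqrt (2*Real.pi))⁻¹ * ((γ⁻¹ - (γ^3)⁻¹) * Real.exp (-γ^2/2)) := by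
        rw [one_div, one_div, one_div]; ring
    _ ≤ (Real.sqrt (2*Real.pi))⁻¹ * ∫ x in Set.Ioi γ, Real.exp (-x^2/2) :=
        mul_le_mul_of_nonneg_left (mills hγ) (by positivity)
    _ = ∫ x in Set.Ioi γ, (Real.sqrt (2*Real.pi))⁻¹ * Real.exp (-x^2/2) :=
        (integral_const_mul _ _).symm
    _ = ∫ t in Set.Ioi γ, gaussianPDFReal 0 1 t :=
        setIntegral_congr_fun measurableSet_Ioi (fun x _ => (hpdf x).symm)

end Aux





/-- For every `δ ∈ (0, 0.05]` and `c ∈ (1, 1.15]`, with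
`γ := c √(log(1/δ)/2)`: the Gaussian anti-concentration quantity
`(1/γ − 1/γ³) (1/√(2π)) exp(−γ²/2)` is at least `δ`; equivalently
`(√2/(c√log(1/δ)) − 2√2/(c³ log(1/δ)^{3/2})) (1/√(2π)) δ^{c²/4} ≥ δ`; and consequently a
standard Gaussian `W` satisfies `P(W ≥ γ) ≥ δ`. -/
theorem gaussian_anticoncentration_delta (δ c : ℝ) (hδ0 : 0 < δ) (hδ : δ ≤ 0.05)
    (hc1 : 1 < c) (hc : c ≤ 1.15) :
    (1 / (c * Real.sqrt (Real.log (1 / δ) / 2))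
        - 1 / (c * Real.sqrt (Real.log (1 / δ) / 2)) ^ 3)
      * (1 / Real.sqrt (2 * Real.pi))
      * Real.exp (-(c * Real.sqrt (Real.log (1 / δ) / 2)) ^ 2 / 2) ≥ δ
    ∧ (Real.sqrt 2 / (c * Real.sqrt (Real.log (1 / δ)))
        - 2 * Real.sqrt 2 / (c ^ 3 * Real.log (1 / δ) ^ ((3 : ℝ) / 2)))
      * (1 / Real.sqrt (2 * Real.pi)) * δ ^ (c ^ 2 / 4) ≥ δ
    ∧ ENNReal.ofReal δ ≤
        gaussianReal 0 1 {x | c * Real.sqrt (Real.log (1 / δ) / 2) ≤ x} := by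
  have hc0 : (0:ℝ) < c := by linarith
  have hkey := key δ c hδ0 hδ hc1 hc
  have hL20 : Real.log 20 ≤ Real.log (1/δ) := by
    apply Real.log_le_log (by norm_num)
    rw [le_div_iff₀ hδ0]; linarith
  set L : ℝ := Real.log (1/δ) with hLdef
  have hLpos : (0:ℝ) < L := by have := log20_lb; linarith
  have h2pos : (0:ℝ) < Real.sqrt 2 := Real.sqrt_pos.mpr (by norm_num)
  have hLs : (0:ℝ) < Real.sqrt L := Real.sqrt_pos.mpr hLpos
  have hA : Real.sqrt (L/2) = Real.sqrt L / Real.sqrt 2 := Real.sqrt_div hLpos.le 2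
  have t1 : Real.sqrt 2 / (c * Real.sqrt L) = 1 / (c * Real.sqrt (L/2)) := by
    rw [hA]
    field_simp
  have hL32 : L ^ ((3:ℝ)/2) = Real.sqrt L ^ 3 := by
    rw [Real.sqrt_eq_rpow, ← Real.rpow_natCast (L ^ ((1:ℝ)/2)) 3, ← Real.rpow_mul hLpos.le]
    norm_num
  have h23 : Real.sqrt 2 ^ 3 = 2 * Real.sqrt 2 := by
    rw [pow_succ, Real.sq_sqrt (by norm_num : (0:ℝ) ≤ 2)]
  have t2 : 2 * Real.sqrt 2 / (c ^ 3 * L ^ ((3:ℝ)/2)) = 1 / (c * Real.sqrt (L/2)) ^ 3 := by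
    rw [hA, hL32, ← h23]
    rw [mul_pow, div_pow]
    field_simp
  have t3 : δ ^ (c^2/4) = Real.exp (-(c * Real.sqrt (L/2))^2/2) := by
    rw [mul_pow, Real.sq_sqrt (by linarith : (0:ℝ) ≤ L/2)]
    rw [Real.rpow_def_of_pos hδ0]
    congr 1
    have hlog : Real.log δ = -L := by
      rw [hLdef, one_div, Real.log_inv, neg_neg]
    rw [hlog]; ring
  have hγ121 : (1.21:ℝ) ≤ c * Real.sqrt (L/2) := by
    have h1 : (1.21:ℝ) ≤ Real.sqrt (L/2) := by
      rw [Real.le_sqrt (by norm_num) (by linarith)]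
      have := log20_lb
      norm_num
      linarith
    nlinarith
  refine ⟨hkey, ?_, ?_⟩
  · rw [ge_iff_le, t1, t2, t3]
    exact hkey
  · apply gauss_tail hγ121
    exact hkey
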